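/- Let q > 1 and ε ≥ 0. Let U be a countable set, let μ and μ' be probability measures on U with μ ≪ μ', and for each u ∈ U let ν_u and ν'_u be probability measures on ℝ^d with ν_u ≪ ν'_u and R_q(ν_u ‖ ν'_u) ≤ ε. Define joint probability measures P and P' on U × ℝ^d by P({u} × A) = μ({u}) ν_u(A) and P'({u} × A) = μ'({u}) ν'_u(A) for measurable A ⊆ ℝ^d. Then R_q(P ‖ P') ≤ ε + R_q(μ ‖ μ'). -/

import Mathlib

open MeasureTheory ProbabilityTheory

/-- Rényi divergence of order `q` of `μ` with respect to `ν`: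
`R_q(μ‖ν) = (1/(q−1)) log ∫ (dμ/dν)^q dν`. -/
noncomputable def renyiDiv {α : Type*} [MeasurableSpace α] (q : ℝ) (μ ν : Measure α) : ℝ :=
  (q - 1)⁻¹ * Real.log (∫ x, ((μ.rnDeriv ν x).toReal) ^ q ∂ν)

lemma integral_rpow_rnDeriv_eq {X : Type*} [MeasurableSpace X] {q : ℝ} (hq : 0 < q)
    (α β : Measure X) [SigmaFinite α] :
    ∫ x, ((α.rnDeriv β x).toReal) ^ q ∂β = (∫⁻ x, (α.rnDeriv β x) ^ q ∂β).toReal := by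
  rw [integral_eq_lintegral_of_nonneg_ae]
  · congr 1
    refine lintegral_congr_ae ?_
    filter_upwards [Measure.rnDeriv_lt_top α β] with x hx
    rw [ENNReal.toReal_rpow, ENNReal.ofReal_toReal]
    exact (ENNReal.rpow_lt_top_of_nonneg hq.le hx.ne).ne
  · exact Filter.Eventually.of_forall fun x => Real.rpow_nonneg ENNReal.toReal_nonneg q
  · exact ((Measure.measurable_rnDeriv α β).ennreal_toReal.pow_const q).aestronglyMeasurable

lemma one_le_lintegral_rpow_rnDeriv {X : Type*} [MeasurableSpace X] {q : ℝ} (hq : 1 < q)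
    (α β : Measure X) [IsProbabilityMeasure α] [IsProbabilityMeasure β] (hab : α ≪ β) :
    1 ≤ ∫⁻ x, (α.rnDeriv β x) ^ q ∂β := by
  have hconj : q.HolderConjugate (q / (q - 1)) := Real.HolderConjugate.conjExponent hq
  have h := ENNReal.lintegral_mul_le_Lp_mul_Lq β hconj
    (Measure.measurable_rnDeriv α β).aemeasurable (g := fun _ => 1) aemeasurable_const
  simp only [mul_one, Pi.mul_apply, ENNReal.one_rpow, lintegral_one, measure_univ,
    one_mul] at h
  rw [Measure.lintegral_rnDeriv hab, measure_univ] at h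
  have h2 : (1 : ENNReal) ≤ (∫⁻ x, (α.rnDeriv β x) ^ q ∂β) ^ (1 / q) := h
  by_contra hlt
  push_neg at hlt
  have := ENNReal.rpow_lt_one hlt (show (0:ℝ) < 1 / q by positivity)
  exact absurd h2 (not_le.mpr this)

lemma measure_eq_sum_of_slices {U X : Type*} [MeasurableSpace U] [MeasurableSingletonClass U]
    [Countable U] [MeasurableSpace X]
    (P : Measure (U × X)) (μ : Measure U) (ν : U → Measure X)
    (h : ∀ u A, MeasurableSet A → P ({u} ×ˢ A) = μ {u} * ν u A) :
    P = Measure.sum (fun u => μ {u} • (ν u).map (Prod.mk u)) := by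
  ext S hS
  have hslice : ∀ u : U, MeasurableSet (Prod.mk u ⁻¹' S) :=
    fun u => measurable_prodMk_left hS
  have hdecomp : S = ⋃ u, ({u} ×ˢ (Prod.mk u ⁻¹' S)) := by
    ext ⟨u, x⟩
    simp [Set.mem_iUnion]
  rw [Measure.sum_apply _ hS]
  conv_lhs => rw [hdecomp]
  rw [measure_iUnion ?_ (fun u => (measurableSet_singleton u).prod (hslice u))]
  · congr 1
    ext u
    rw [h u _ (hslice u), Measure.smul_apply,
      Measure.map_apply measurable_prodMk_left hS, smul_eq_mul]
  · intro u v huv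
    rw [Function.onFun, Set.disjoint_left]
    rintro ⟨a, b⟩ ⟨ha, -⟩ ⟨hb, -⟩
    exact huv (ha.symm.trans hb)

section Main
variable {U X : Type*} [MeasurableSpace U] [MeasurableSingletonClass U]
    [Countable U] [MeasurableSpace X]

lemma joint_rnDeriv (q : ℝ) (hq : 1 < q)
    (μ μ' : Measure U) [IsProbabilityMeasure μ] [IsProbabilityMeasure μ'] (hac : μ ≪ μ')
    (ν ν' : U → Measure X)
    (hνprob : ∀ u, IsProbabilityMeasure (ν u))
    (hν'prob : ∀ u, IsProbabilityMeasure (ν' u))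
    (hνac : ∀ u, ν u ≪ ν' u)
    (P P' : Measure (U × X)) [IsProbabilityMeasure P] [IsProbabilityMeasure P']
    (hP : ∀ u A, MeasurableSet A → P ({u} ×ˢ A) = μ {u} * ν u A)
    (hP' : ∀ u A, MeasurableSet A → P' ({u} ×ˢ A) = μ' {u} * ν' u A) :
    ∫⁻ p, (P.rnDeriv P' p) ^ q ∂P'
      = ∑' u, μ' {u} * ((μ.rnDeriv μ' u) ^ q * ∫⁻ x, ((ν u).rnDeriv (ν' u) x) ^ q ∂(ν' u)) := by
  haveI := hνprob; haveI := hν'prob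
  set f : U × X → ENNReal := fun p => μ.rnDeriv μ' p.1 * (ν p.1).rnDeriv (ν' p.1) p.2 with hf
  have hfm : Measurable f := by
    have : Measurable fun p : X × U => μ.rnDeriv μ' p.2 * (ν p.2).rnDeriv (ν' p.2) p.1 := by
      apply measurable_from_prod_countable_left
      intro u
      dsimp only
      exact measurable_const.mul (Measure.measurable_rnDeriv (ν u) (ν' u))
    exact this.comp measurable_swap
  have hPQ := measure_eq_sum_of_slices P μ ν hP
  have hP'Q := measure_eq_sum_of_slices P' μ' ν' hP'
  -- key: P = P'.withDensity f
  have hkey : P = P'.withDensity f := by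
    rw [hPQ, hP'Q]
    ext S hS
    have hslice : ∀ u : U, MeasurableSet (Prod.mk u ⁻¹' S) :=
      fun u => measurable_prodMk_left hS
    rw [withDensity_apply _ hS, Measure.restrict_sum _ hS, lintegral_sum_measure,
      Measure.sum_apply _ hS]
    congr 1
    ext u
    rw [Measure.restrict_smul, lintegral_smul_measure,
      Measure.restrict_map measurable_prodMk_left hS,
      lintegral_map hfm measurable_prodMk_left]
    simp only [hf]
    rw [lintegral_const_mul _ (Measure.measurable_rnDeriv (ν u) (ν' u)),
      Measure.setLIntegral_rnDeriv (hνac u)]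
    have hμu : μ' {u} * μ.rnDeriv μ' u = μ {u} := by
      have := Measure.setLIntegral_rnDeriv hac ({u} : Set U)
      rw [lintegral_singleton] at this
      rw [mul_comm]
      exact this
    rw [Measure.smul_apply, Measure.map_apply measurable_prodMk_left hS, smul_eq_mul,
      smul_eq_mul, ← mul_assoc, hμu]
  have hrn : P.rnDeriv P' =ᵐ[P'] f := by
    rw [hkey]
    exact Measure.rnDeriv_withDensity P' hfm
  calc ∫⁻ p, (P.rnDeriv P' p) ^ q ∂P'
      = ∫⁻ p, (f p) ^ q ∂P' := lintegral_congr_ae (hrn.mono fun p hp => by simp only [hp])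
    _ = ∑' u, μ' {u} * ((μ.rnDeriv μ' u) ^ q * ∫⁻ x, ((ν u).rnDeriv (ν' u) x) ^ q ∂(ν' u)) := by
        conv_lhs => rw [hP'Q]
        rw [lintegral_sum_measure]
        congr 1
        ext u
        rw [lintegral_smul_measure,
          lintegral_map (hfm.pow_const q) measurable_prodMk_left]
        simp only [hf, smul_eq_mul]
        congr 1
        rw [← lintegral_const_mul _ ((Measure.measurable_rnDeriv (ν u) (ν' u)).pow_const q)]
        congr 1
        ext x
        rw [ENNReal.mul_rpow_of_nonneg _ _ (by positivity : (0:ℝ) ≤ q)]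
end Main

/-- **Composition bound for Rényi divergence.** Let `q > 1` and `ε ≥ 0`. Let `U` be a
countable set, `μ ≪ μ'` probability measures on `U`, and for each `u` let `ν u ≪ ν' u` be
probability measures on `ℝ^d` with `R_q(ν u ‖ ν' u) ≤ ε`. If `P` and `P'` are the joint
probability measures on `U × ℝ^d` determined by `P({u} × A) = μ{u} · ν u (A)` and
`P'({u} × A) = μ'{u} · ν' u (A)`, then `R_q(P ‖ P') ≤ ε + R_q(μ ‖ μ')`. -/
theorem renyiDiv_joint_le {U : Type*} [MeasurableSpace U] [MeasurableSingletonClass U]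
    [Countable U] {d : ℕ} (q ε : ℝ) (hq : 1 < q) (hε : 0 ≤ ε)
    (μ μ' : Measure U) [IsProbabilityMeasure μ] [IsProbabilityMeasure μ']
    (hac : μ ≪ μ')
    (ν ν' : U → Measure (EuclideanSpace ℝ (Fin d)))
    (hνprob : ∀ u, IsProbabilityMeasure (ν u))
    (hν'prob : ∀ u, IsProbabilityMeasure (ν' u))
    (hνac : ∀ u, ν u ≪ ν' u)
    (hνdiv : ∀ u, renyiDiv q (ν u) (ν' u) ≤ ε)
    (P P' : Measure (U × EuclideanSpace ℝ (Fin d)))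
    [IsProbabilityMeasure P] [IsProbabilityMeasure P']
    (hP : ∀ (u : U) (A : Set (EuclideanSpace ℝ (Fin d))), MeasurableSet A →
      P ({u} ×ˢ A) = μ {u} * ν u A)
    (hP' : ∀ (u : U) (A : Set (EuclideanSpace ℝ (Fin d))), MeasurableSet A →
      P' ({u} ×ˢ A) = μ' {u} * ν' u A) :
    renyiDiv q P P' ≤ ε + renyiDiv q μ μ' := by
  haveI := hνprob; haveI := hν'prob
  have hq0 : (0:ℝ) < q := lt_trans one_pos hq
  have hq1 : (0:ℝ) < q - 1 := sub_pos.mpr hq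
  set J : U → ENNReal := fun u => ∫⁻ x, ((ν u).rnDeriv (ν' u) x) ^ q ∂(ν' u) with hJdef
  set I : ENNReal := ∫⁻ p, (P.rnDeriv P' p) ^ q ∂P' with hIdef
  set Iμ : ENNReal := ∫⁻ u, (μ.rnDeriv μ' u) ^ q ∂μ' with hIμdef
  set C : ENNReal := ENNReal.ofReal (Real.exp ((q - 1) * ε)) with hCdef
  have hCne : C ≠ ⊤ := ENNReal.ofReal_ne_top
  have hCtoReal : C.toReal = Real.exp ((q - 1) * ε) :=
    ENNReal.toReal_ofReal (Real.exp_pos _).le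
  have hI_eq : I = ∑' u, μ' {u} * ((μ.rnDeriv μ' u) ^ q * J u) :=
    joint_rnDeriv q hq μ μ' hac ν ν' hνprob hν'prob hνac P P' hP hP'
  have hIμ_eq : Iμ = ∑' u, (μ.rnDeriv μ' u) ^ q * μ' {u} := lintegral_countable' _
  -- per-u Jensen: 1 ≤ J u
  have hJ1 : ∀ u, 1 ≤ J u := fun u => one_le_lintegral_rpow_rnDeriv hq (ν u) (ν' u) (hνac u)
  -- per-u bound: J u finite → J u ≤ C
  have hJC : ∀ u, J u ≠ ⊤ → J u ≤ C := by
    intro u hfin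
    have h := hνdiv u
    rw [renyiDiv, integral_rpow_rnDeriv_eq hq0] at h
    have hlog : Real.log ((J u).toReal) ≤ (q - 1) * ε := by
      have := mul_le_mul_of_nonneg_left h hq1.le
      rwa [← mul_assoc, mul_inv_cancel₀ hq1.ne', one_mul] at this
    have htr : (J u).toReal ≤ Real.exp ((q - 1) * ε) := by
      rcases le_or_gt (J u).toReal 0 with h0 | h0
      · exact h0.trans (Real.exp_pos _).le
      · exact (Real.log_le_iff_le_exp h0).mp hlog
    calc J u = ENNReal.ofReal ((J u).toReal) := (ENNReal.ofReal_toReal hfin).symm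
      _ ≤ C := ENNReal.ofReal_le_ofReal htr
  -- Iμ ≤ I
  have hIμI : Iμ ≤ I := by
    rw [hI_eq, hIμ_eq]
    refine ENNReal.tsum_le_tsum fun u => ?_
    calc (μ.rnDeriv μ' u) ^ q * μ' {u} = μ' {u} * ((μ.rnDeriv μ' u) ^ q * 1) := by ring
      _ ≤ μ' {u} * ((μ.rnDeriv μ' u) ^ q * J u) := by gcongr; exact hJ1 u
  have hIμ1 : 1 ≤ Iμ := one_le_lintegral_rpow_rnDeriv hq μ μ' hac
  rw [renyiDiv, renyiDiv, integral_rpow_rnDeriv_eq hq0, integral_rpow_rnDeriv_eq hq0,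
    ← hIdef, ← hIμdef]
  by_cases hI : I = ⊤
  · have hlogμ : 0 ≤ Real.log Iμ.toReal := by
      by_cases hIμ : Iμ = ⊤
      · simp [hIμ]
      · exact Real.log_nonneg (by simpa using ENNReal.toReal_mono hIμ hIμ1)
    rw [hI]
    simp only [ENNReal.toReal_top, Real.log_zero, mul_zero]
    positivity
  · have hIμfin : Iμ ≠ ⊤ := fun h => hI (top_le_iff.mp (h ▸ hIμI))
    have hIC : I ≤ C * Iμ := by
      rw [hI_eq, hIμ_eq, ← ENNReal.tsum_mul_left]
      refine ENNReal.tsum_le_tsum fun u => ?_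
      rcases eq_or_ne (J u) ⊤ with hJt | hJt
      · have hterm : μ' {u} * ((μ.rnDeriv μ' u) ^ q * J u) ≠ ⊤ := by
          refine ne_top_of_le_ne_top ?_ (ENNReal.le_tsum (f := fun u => μ' {u} * ((μ.rnDeriv μ' u) ^ q * J u)) u)
          rw [← hI_eq]; exact hI
        have ha : μ' {u} * (μ.rnDeriv μ' u) ^ q = 0 := by
          by_contra ha
          apply hterm
          rw [← mul_assoc, hJt, ENNReal.mul_top ha]
        rw [← mul_assoc, ha, zero_mul]
        exact bot_le
      · calc μ' {u} * ((μ.rnDeriv μ' u) ^ q * J u)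
            ≤ μ' {u} * ((μ.rnDeriv μ' u) ^ q * C) := by gcongr; exact hJC u hJt
          _ = C * ((μ.rnDeriv μ' u) ^ q * μ' {u}) := by ring
    have hItr : I.toReal ≤ C.toReal * Iμ.toReal := by
      rw [← ENNReal.toReal_mul]
      exact ENNReal.toReal_mono (ENNReal.mul_ne_top hCne hIμfin) hIC
    have hIpos : (0:ℝ) < I.toReal := by
      have : (1:ℝ) ≤ I.toReal := by simpa using ENNReal.toReal_mono hI (hIμ1.trans hIμI)
      linarith
    have hIμpos : (0:ℝ) < Iμ.toReal := by
      have : (1:ℝ) ≤ Iμ.toReal := by simpa using ENNReal.toReal_mono hIμfin hIμ1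
      linarith
    have hlog : Real.log I.toReal ≤ (q - 1) * ε + Real.log Iμ.toReal := by
      calc Real.log I.toReal ≤ Real.log (C.toReal * Iμ.toReal) := Real.log_le_log hIpos hItr
        _ = (q - 1) * ε + Real.log Iμ.toReal := by
            rw [Real.log_mul (by rw [hCtoReal]; exact (Real.exp_pos _).ne') hIμpos.ne',
              hCtoReal, Real.log_exp]
    have := mul_le_mul_of_nonneg_left hlog (inv_nonneg.mpr hq1.le)
    calc (q - 1)⁻¹ * Real.log I.toReal
        ≤ (q - 1)⁻¹ * ((q - 1) * ε + Real.log Iμ.toReal) := this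
      _ = ε + (q - 1)⁻¹ * Real.log Iμ.toReal := by field_simp
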